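/- Let A and B be n×n complex positive semidefinite matrices and let 1 ≤ i_1 < i_2 < ... < i_k ≤ n be any indices. Then ∏_{t=1}^k λ_{i_t}(A + B)^{1/k} ≥ ∏_{t=1}^k λ_{i_t}(A)^{1/k} + ∏_{t=1}^k λ_{n−t+1}(B)^{1/k}. -/

import Mathlib

open Matrix
open scoped ComplexOrder

/-- The `t`-th largest eigenvalue (0-indexed) of a Hermitian matrix
(junk value `0` if the matrix is not Hermitian). -/
noncomputable def eigval {n : ℕ} (A : Matrix (Fin n) (Fin n) ℂ) (t : Fin n) : ℝ :=
  if h : A.IsHermitian then h.eigenvalues (Tuple.sort h.eigenvalues t.rev) else 0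

/-- The `t`-th largest singular value (0-indexed) of a square complex matrix. -/
noncomputable def singval {n : ℕ} (X : Matrix (Fin n) (Fin n) ℂ) (t : Fin n) : ℝ :=
  Real.sqrt (eigval (Xᴴ * X) t)

namespace PRF

/-- GM superadditivity -/
theorem gm_superadd {ι : Type*} (s : Finset ι) (hs : s.Nonempty) (f g : ι → ℝ)
    (hf : ∀ i ∈ s, 0 ≤ f i) (hg : ∀ i ∈ s, 0 ≤ g i) :
    (∏ i ∈ s, f i) ^ ((s.card : ℝ)⁻¹) + (∏ i ∈ s, g i) ^ ((s.card : ℝ)⁻¹)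
      ≤ (∏ i ∈ s, (f i + g i)) ^ ((s.card : ℝ)⁻¹) := by
  have hcard : (0:ℝ) < s.card := by exact_mod_cast Finset.card_pos.mpr hs
  have hrne : ((s.card : ℝ)⁻¹) ≠ 0 := by positivity
  have hrnn : (0:ℝ) ≤ (s.card : ℝ)⁻¹ := by positivity
  by_cases h0 : ∃ i ∈ s, f i + g i = 0
  · obtain ⟨i, his, hi0⟩ := h0
    have hfi : f i = 0 := le_antisymm (by nlinarith [hf i his, hg i his]) (hf i his)
    have hgi : g i = 0 := le_antisymm (by nlinarith [hf i his, hg i his]) (hg i his)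
    have h1 : (∏ j ∈ s, f j) = 0 := Finset.prod_eq_zero his hfi
    have h2 : (∏ j ∈ s, g j) = 0 := Finset.prod_eq_zero his hgi
    rw [h1, h2, Real.zero_rpow hrne]
    simpa using Real.rpow_nonneg (Finset.prod_nonneg (fun j hj => by
      have := hf j hj; have := hg j hj; linarith)) _
  · push_neg at h0
    have hpos : ∀ i ∈ s, 0 < f i + g i := fun i hi =>
      lt_of_le_of_ne (by have := hf i hi; have := hg i hi; linarith) (Ne.symm (h0 i hi))
    have hProd : 0 < ∏ i ∈ s, (f i + g i) := Finset.prod_pos hpos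
    set r : ℝ := (s.card : ℝ)⁻¹ with hr
    set c : ℝ := (∏ i ∈ s, (f i + g i)) ^ r with hc
    have hcpos : 0 < c := Real.rpow_pos_of_pos hProd _
    have key : ∀ u : ι → ℝ, (∀ i ∈ s, 0 ≤ u i) →
        (∏ i ∈ s, u i) ^ r ≤ c * ∑ i ∈ s, r * (u i / (f i + g i)) := by
      intro u hu
      have h1 : (∏ i ∈ s, u i) ^ r = c * (∏ i ∈ s, (u i / (f i + g i))) ^ r := by
        rw [Finset.prod_div_distrib, Real.div_rpow (Finset.prod_nonneg hu) hProd.le]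
        field_simp
        rw [hc]
      rw [h1]
      have h2 : (∏ i ∈ s, (u i / (f i + g i))) ^ r
          = ∏ i ∈ s, (u i / (f i + g i)) ^ r := by
        rw [Real.finset_prod_rpow s _ (fun i hi => div_nonneg (hu i hi) (hpos i hi).le) r]
      rw [h2]
      have h3 := Real.geom_mean_le_arith_mean_weighted s (fun _ => r)
        (fun i => u i / (f i + g i)) (fun i _ => hrnn)
        (by rw [Finset.sum_const, nsmul_eq_mul, hr]; field_simp)
        (fun i hi => div_nonneg (hu i hi) (hpos i hi).le)
      exact mul_le_mul_of_nonneg_left h3 hcpos.le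
    have kf := key f hf
    have kg := key g hg
    have hsum : (∑ i ∈ s, r * (f i / (f i + g i))) + (∑ i ∈ s, r * (g i / (f i + g i))) = 1 := by
      rw [← Finset.sum_add_distrib]
      have : ∀ i ∈ s, r * (f i / (f i + g i)) + r * (g i / (f i + g i)) = r := by
        intro i hi
        have := hpos i hi
        field_simp
      rw [Finset.sum_congr rfl this, Finset.sum_const, nsmul_eq_mul, hr]
      field_simp
    calc (∏ i ∈ s, f i) ^ r + (∏ i ∈ s, g i) ^ r
        ≤ c * (∑ i ∈ s, r * (f i / (f i + g i))) + c * (∑ i ∈ s, r * (g i / (f i + g i))) :=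
          add_le_add kf kg
      _ = c := by rw [← mul_add, hsum, mul_one]



variable {N : ℕ} {M : Matrix (Fin N) (Fin N) ℂ}

/-- sorting permutation: `eigval M t = hM.eigenvalues (sIdx hM t)` -/
noncomputable def sIdx (hM : M.IsHermitian) : Equiv.Perm (Fin N) :=
  (Fin.revPerm).trans (Tuple.sort hM.eigenvalues)

theorem eigval_eq (hM : M.IsHermitian) (t : Fin N) :
    eigval M t = hM.eigenvalues (sIdx hM t) := by
  rw [eigval, dif_pos hM]; rfl

theorem eigval_antitone (hM : M.IsHermitian) : Antitone (eigval M) := by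
  intro t s hts
  rw [eigval_eq hM, eigval_eq hM]
  have h := Tuple.monotone_sort hM.eigenvalues
  exact h (Fin.rev_le_rev.mpr hts)

theorem eigval_nonneg (hM : M.PosSemidef) (t : Fin N) : 0 ≤ eigval M t := by
  rw [eigval_eq hM.1]; exact hM.eigenvalues_nonneg _

theorem prod_eigval (hM : M.IsHermitian) : ∏ t, eigval M t = ∏ i, hM.eigenvalues i := by
  simp_rw [eigval_eq hM]; exact Equiv.prod_comp (sIdx hM) _

/-- sorted eigenvectors -/
noncomputable def evec (hM : M.IsHermitian) (t : Fin N) : Fin N → ℂ :=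
  (WithLp.equiv 2 _) (hM.eigenvectorBasis (sIdx hM t))

theorem evec_mulVec (hM : M.IsHermitian) (t : Fin N) :
    M *ᵥ evec hM t = eigval M t • evec hM t := by
  rw [eigval_eq hM, evec]; exact hM.mulVec_eigenvectorBasis _

theorem evec_ortho (hM : M.IsHermitian) (s t : Fin N) :
    star (evec hM s) ⬝ᵥ evec hM t = if s = t then 1 else 0 := by
  have h := (orthonormal_iff_ite (𝕜 := ℂ)).mp hM.eigenvectorBasis.orthonormal
    (sIdx hM s) (sIdx hM t)
  rw [EuclideanSpace.inner_eq_star_dotProduct, dotProduct_comm] at h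
  simpa [evec, EmbeddingLike.apply_eq_iff_eq] using h

-- dot product sum helpers
theorem dot_sum_right {ι : Type*} (s : Finset ι) (u : Fin N → ℂ) (w : ι → Fin N → ℂ) :
    u ⬝ᵥ (∑ t ∈ s, w t) = ∑ t ∈ s, u ⬝ᵥ w t := by
  simp [dotProduct, Finset.mul_sum]
  exact Finset.sum_comm

theorem dot_sum_left {ι : Type*} (s : Finset ι) (u : Fin N → ℂ) (w : ι → Fin N → ℂ) :
    (∑ t ∈ s, w t) ⬝ᵥ u = ∑ t ∈ s, w t ⬝ᵥ u := by
  simp [dotProduct, Finset.sum_mul]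
  exact Finset.sum_comm

theorem star_sum_smul {ι : Type*} (s : Finset ι) (c : ι → ℂ) (w : ι → Fin N → ℂ) :
    star (∑ t ∈ s, c t • w t) = ∑ t ∈ s, (starRingEnd ℂ) (c t) • star (w t) := by
  rw [star_sum]
  exact Finset.sum_congr rfl fun t _ => by rw [star_smul]; rfl

/-- main expansion: orthonormal family -/
theorem dot_sums {ι : Type*} [DecidableEq ι] (s : Finset ι) (v : ι → Fin N → ℂ)
    (hv : ∀ a ∈ s, ∀ b ∈ s, star (v a) ⬝ᵥ v b = if a = b then 1 else 0)
    (c d : ι → ℂ) :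
    star (∑ t ∈ s, c t • v t) ⬝ᵥ (∑ t ∈ s, d t • v t)
      = ∑ t ∈ s, (starRingEnd ℂ) (c t) * d t := by
  rw [star_sum_smul, dot_sum_left]
  have : ∀ a ∈ s, ((starRingEnd ℂ) (c a) • star (v a)) ⬝ᵥ (∑ t ∈ s, d t • v t)
      = (starRingEnd ℂ) (c a) * d a := by
    intro a ha
    rw [smul_dotProduct, dot_sum_right]
    have h2 : ∀ b ∈ s, star (v a) ⬝ᵥ (d b • v b) = if a = b then d b else 0 := by
      intro b hb
      rw [dotProduct_smul, hv a ha b hb]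
      by_cases h : a = b <;> simp [h]
    rw [Finset.sum_congr rfl h2, Finset.sum_ite_eq s a d, if_pos ha, smul_eq_mul]
  rw [Finset.sum_congr rfl this]



variable {N : ℕ} {M : Matrix (Fin N) (Fin N) ℂ}


/-- span of a set of sorted eigenvectors -/
noncomputable def ESpan (hM : M.IsHermitian) (F : Finset (Fin N)) :
    Submodule ℂ (Fin N → ℂ) :=
  Submodule.span ℂ (Set.range (fun t : F => evec hM (t : Fin N)))

theorem mem_espan (hM : M.IsHermitian) (F : Finset (Fin N)) (x : Fin N → ℂ) :
    x ∈ ESpan hM F ↔ ∃ c : Fin N → ℂ, x = ∑ t ∈ F, c t • evec hM t := by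
  rw [ESpan, Submodule.mem_span_range_iff_exists_fun]
  constructor
  · rintro ⟨c, hc⟩
    classical
    refine ⟨fun t => if h : t ∈ F then c ⟨t, h⟩ else 0, ?_⟩
    rw [← hc, ← Finset.sum_attach F (fun t => (if h : t ∈ F then c ⟨t, h⟩ else 0) • evec hM t)]
    exact Finset.sum_congr rfl fun t _ => by rw [dif_pos t.2]
  · rintro ⟨c, hc⟩
    refine ⟨fun t => c t, ?_⟩
    rw [hc, ← Finset.sum_attach F (fun t => c t • evec hM t), Finset.univ_eq_attach]

theorem linindep_evec_sub (hM : M.IsHermitian) (F : Finset (Fin N)) :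
    LinearIndependent ℂ (fun t : F => evec hM (t : Fin N)) := by
  rw [Fintype.linearIndependent_iff]
  intro g hg j
  have h := congrArg (fun y => star (evec hM (j : Fin N)) ⬝ᵥ y) hg
  simp only [dotProduct_zero] at h
  rw [Finset.univ_eq_attach, dot_sum_right] at h
  have h2 : ∀ i ∈ F.attach, star (evec hM (j:Fin N)) ⬝ᵥ (g i • evec hM (i:Fin N))
      = if i = j then g i else 0 := by
    intro i _
    rw [dotProduct_smul, evec_ortho]
    by_cases hij : i = j
    · simp [hij, Subtype.ext_iff.mp hij]
    · have : (j : Fin N) ≠ (i : Fin N) := fun hc => hij (Subtype.ext hc.symm)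
      simp [this, hij]
  rw [Finset.sum_congr rfl h2, Finset.sum_ite_eq' F.attach j g, if_pos (Finset.mem_attach _ _)] at h
  exact h

theorem finrank_espan (hM : M.IsHermitian) (F : Finset (Fin N)) :
    Module.finrank ℂ (ESpan hM F) = F.card := by
  rw [ESpan, finrank_span_eq_card (linindep_evec_sub hM F), Fintype.card_coe]


theorem re_star_dot_self (x : Fin N → ℂ) :
    (star x ⬝ᵥ x).re = ∑ i, Complex.normSq (x i) := by
  rw [dotProduct, Complex.re_sum]
  exact Finset.sum_congr rfl fun i _ => by
    simp [Complex.normSq_apply, Complex.mul_re]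

theorem nsq_nonneg (x : Fin N → ℂ) : 0 ≤ (star x ⬝ᵥ x).re := by
  rw [re_star_dot_self]; exact Finset.sum_nonneg fun i _ => Complex.normSq_nonneg _

theorem nsq_pos {x : Fin N → ℂ} (hx : x ≠ 0) : 0 < (star x ⬝ᵥ x).re := by
  rw [re_star_dot_self]
  obtain ⟨i, hi⟩ := Function.ne_iff.mp hx
  exact Finset.sum_pos' (fun j _ => Complex.normSq_nonneg _)
    ⟨i, Finset.mem_univ i, by simpa [Complex.normSq_pos] using hi⟩

/-- Rayleigh expansion for members of an eigen-span. -/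
theorem ray_expansion (hM : M.IsHermitian) (F : Finset (Fin N)) (c : Fin N → ℂ) :
    (star (∑ t ∈ F, c t • evec hM t) ⬝ᵥ (M *ᵥ ∑ t ∈ F, c t • evec hM t)).re
        = ∑ t ∈ F, eigval M t * Complex.normSq (c t)
      ∧ (star (∑ t ∈ F, c t • evec hM t) ⬝ᵥ (∑ t ∈ F, c t • evec hM t)).re
        = ∑ t ∈ F, Complex.normSq (c t) := by
  have horth : ∀ a ∈ F, ∀ b ∈ F, star (evec hM a) ⬝ᵥ evec hM b = if a = b then 1 else 0 :=
    fun a _ b _ => evec_ortho hM a b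
  have hMx : M *ᵥ (∑ t ∈ F, c t • evec hM t) = ∑ t ∈ F, ((eigval M t : ℂ) * c t) • evec hM t := by
    show M.mulVecLin (∑ t ∈ F, c t • evec hM t) = _
    rw [map_sum]
    refine Finset.sum_congr rfl fun t _ => ?_
    rw [LinearMap.map_smul, mulVecLin_apply, evec_mulVec hM t]
    ext i
    simp [Complex.real_smul]
    ring
  constructor
  · rw [hMx, dot_sums F _ horth, Complex.re_sum]
    refine Finset.sum_congr rfl fun t _ => ?_
    have : (starRingEnd ℂ) (c t) * ((eigval M t : ℂ) * c t)
        = (eigval M t : ℂ) * ((starRingEnd ℂ) (c t) * c t) := by ring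
    rw [this, mul_comm ((starRingEnd ℂ) (c t)) (c t), Complex.mul_conj,
      ← Complex.ofReal_mul, Complex.ofReal_re]
  · have := dot_sums F _ horth c c
    rw [this, Complex.re_sum]
    refine Finset.sum_congr rfl fun t _ => ?_
    rw [mul_comm ((starRingEnd ℂ) (c t)) (c t), Complex.mul_conj, Complex.ofReal_re]

theorem ray_le_of_mem (hM : M.IsHermitian) (F : Finset (Fin N)) (cb : ℝ)
    (hcb : ∀ t ∈ F, eigval M t ≤ cb) {x : Fin N → ℂ} (hx : x ∈ ESpan hM F) :
    (star x ⬝ᵥ (M *ᵥ x)).re ≤ cb * (star x ⬝ᵥ x).re := by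
  obtain ⟨c, rfl⟩ := (mem_espan hM F x).mp hx
  obtain ⟨h1, h2⟩ := ray_expansion hM F c
  rw [h1, h2, Finset.mul_sum]
  exact Finset.sum_le_sum fun t ht =>
    mul_le_mul_of_nonneg_right (hcb t ht) (Complex.normSq_nonneg _)

theorem ray_ge_of_mem (hM : M.IsHermitian) (F : Finset (Fin N)) (cb : ℝ)
    (hcb : ∀ t ∈ F, cb ≤ eigval M t) {x : Fin N → ℂ} (hx : x ∈ ESpan hM F) :
    cb * (star x ⬝ᵥ x).re ≤ (star x ⬝ᵥ (M *ᵥ x)).re := by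
  obtain ⟨c, rfl⟩ := (mem_espan hM F x).mp hx
  obtain ⟨h1, h2⟩ := ray_expansion hM F c
  rw [h1, h2, Finset.mul_sum]
  exact Finset.sum_le_sum fun t ht =>
    mul_le_mul_of_nonneg_right (hcb t ht) (Complex.normSq_nonneg _)

/-- members of eigen-spans are orthogonal to the other eigenvectors -/
theorem espan_orth (hM : M.IsHermitian) (F : Finset (Fin N)) {x : Fin N → ℂ}
    (hx : x ∈ ESpan hM F) {t : Fin N} (ht : t ∉ F) :
    star x ⬝ᵥ evec hM t = 0 := by
  obtain ⟨c, rfl⟩ := (mem_espan hM F x).mp hx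
  rw [star_sum_smul, dot_sum_left]
  refine Finset.sum_eq_zero fun a ha => ?_
  have hne : a ≠ t := fun h => ht (by rwa [h] at ha)
  rw [smul_dotProduct, evec_ortho hM a t, if_neg hne]
  simp

theorem exists_ne_zero_mem_inf (T T' : Submodule ℂ (Fin N → ℂ))
    (h : N < Module.finrank ℂ T + Module.finrank ℂ T') :
    ∃ x : Fin N → ℂ, x ≠ 0 ∧ x ∈ T ⊓ T' := by
  have hdim := Submodule.finrank_sup_add_finrank_inf_eq T T'
  have hle : Module.finrank ℂ (T ⊔ T' : Submodule ℂ (Fin N → ℂ)) ≤ N := by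
    have := Submodule.finrank_le (T ⊔ T' : Submodule ℂ (Fin N → ℂ))
    rwa [Module.finrank_pi, Fintype.card_fin] at this
  have hpos : 0 < Module.finrank ℂ (T ⊓ T' : Submodule ℂ (Fin N → ℂ)) := by omega
  haveI := Module.finrank_pos_iff (R := ℂ) (M := (T ⊓ T' : Submodule ℂ (Fin N → ℂ))) |>.mp hpos
  obtain ⟨y, hy⟩ := exists_ne (0 : (T ⊓ T' : Submodule ℂ (Fin N → ℂ)))
  exact ⟨y, fun hc => hy (Subtype.ext hc), y.2⟩




variable {N : ℕ} {M : Matrix (Fin N) (Fin N) ℂ}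

theorem card_filter_lt {q : ℕ} (hq : q ≤ N) :
    (Finset.univ.filter (fun t : Fin N => t.val < q)).card = q := by
  classical
  have himg : (Finset.univ.filter (fun t : Fin N => t.val < q)) =
      (Finset.univ : Finset (Fin q)).image (Fin.castLE hq) := by
    ext t
    simp only [Finset.mem_filter, Finset.mem_univ, true_and, Finset.mem_image]
    constructor
    · intro ht; exact ⟨⟨t.val, ht⟩, Fin.ext rfl⟩
    · rintro ⟨s, -, rfl⟩; exact s.isLt
  rw [himg, Finset.card_image_of_injective _ (Fin.castLE_injective hq),
    Finset.card_univ, Fintype.card_fin]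

theorem card_filter_ge {p : ℕ} (hp : p ≤ N) :
    (Finset.univ.filter (fun t : Fin N => p ≤ t.val)).card = N - p := by
  classical
  have : (Finset.univ.filter (fun t : Fin N => p ≤ t.val))
      = Finset.univ \ (Finset.univ.filter (fun t : Fin N => t.val < p)) := by
    ext t; simp [not_lt]
  rw [this, Finset.card_sdiff_of_subset (Finset.filter_subset _ _), Finset.card_univ, Fintype.card_fin,
    card_filter_lt hp]

theorem cf_upper (hM : M.IsHermitian) (j : Fin N) (T : Submodule ℂ (Fin N → ℂ))
    (hdim : N - j.val ≤ Module.finrank ℂ T) (cb : ℝ)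
    (hray : ∀ x ∈ T, (star x ⬝ᵥ (M *ᵥ x)).re ≤ cb * (star x ⬝ᵥ x).re) :
    eigval M j ≤ cb := by
  classical
  set F : Finset (Fin N) := Finset.univ.filter (fun t => t.val ≤ j.val) with hF
  have hcard : F.card = j.val + 1 := by
    have : F = Finset.univ.filter (fun t : Fin N => t.val < j.val + 1) := by
      ext t; simp [hF, Nat.lt_succ_iff]
    rw [this, card_filter_lt (by omega : j.val + 1 ≤ N)]
  have hrank : Module.finrank ℂ (ESpan hM F) = j.val + 1 := by
    rw [finrank_espan hM F, hcard]
  obtain ⟨x, hx0, hxT, hxS⟩ : ∃ x : Fin N → ℂ, x ≠ 0 ∧ x ∈ T ∧ x ∈ ESpan hM F := by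
    obtain ⟨x, hx0, hx⟩ := exists_ne_zero_mem_inf T (ESpan hM F) (by
      rw [hrank]; have := j.isLt; omega)
    exact ⟨x, hx0, hx.1, hx.2⟩
  have hlow : eigval M j * (star x ⬝ᵥ x).re ≤ (star x ⬝ᵥ (M *ᵥ x)).re := by
    refine ray_ge_of_mem hM F (eigval M j) (fun t ht => ?_) hxS
    exact eigval_antitone hM (Fin.le_def.mpr (Finset.mem_filter.mp ht).2)
  have hup := hray x hxT
  have hnsq := nsq_pos hx0
  nlinarith [hlow, hup, hnsq]

theorem cf_lower (hM : M.IsHermitian) (j : Fin N) (T : Submodule ℂ (Fin N → ℂ))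
    (hdim : j.val + 1 ≤ Module.finrank ℂ T) (cb : ℝ)
    (hray : ∀ x ∈ T, cb * (star x ⬝ᵥ x).re ≤ (star x ⬝ᵥ (M *ᵥ x)).re) :
    cb ≤ eigval M j := by
  classical
  set F : Finset (Fin N) := Finset.univ.filter (fun t => j.val ≤ t.val) with hF
  have hcard : F.card = N - j.val := card_filter_ge (by omega : j.val ≤ N)
  have hrank : Module.finrank ℂ (ESpan hM F) = N - j.val := by
    rw [finrank_espan hM F, hcard]
  obtain ⟨x, hx0, hxT, hxS⟩ : ∃ x : Fin N → ℂ, x ≠ 0 ∧ x ∈ T ∧ x ∈ ESpan hM F := by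
    obtain ⟨x, hx0, hx⟩ := exists_ne_zero_mem_inf T (ESpan hM F) (by
      rw [hrank]; have := j.isLt; omega)
    exact ⟨x, hx0, hx.1, hx.2⟩
  have hupb : (star x ⬝ᵥ (M *ᵥ x)).re ≤ eigval M j * (star x ⬝ᵥ x).re := by
    refine ray_le_of_mem hM F (eigval M j) (fun t ht => ?_) hxS
    exact eigval_antitone hM (Fin.le_def.mpr (Finset.mem_filter.mp ht).2)
  have hlo := hray x hxT
  have hnsq := nsq_pos hx0
  nlinarith [hupb, hlo, hnsq]




variable {N : ℕ}


/-- the linear functional `x ↦ star w ⬝ᵥ x` -/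
noncomputable def dotphi (w : Fin N → ℂ) : (Fin N → ℂ) →ₗ[ℂ] ℂ where
  toFun := fun x => star w ⬝ᵥ x
  map_add' := fun x y => dotProduct_add _ x y
  map_smul' := fun c x => dotProduct_smul c _ x

noncomputable def wPerp (w : Fin N → ℂ) : Submodule ℂ (Fin N → ℂ) :=
  LinearMap.ker (dotphi w)

theorem mem_wPerp (w x : Fin N → ℂ) : x ∈ wPerp w ↔ star w ⬝ᵥ x = 0 := Iff.rfl

theorem finrank_wPerp {w : Fin N → ℂ} (hw : w ≠ 0) :
    Module.finrank ℂ (wPerp w) = N - 1 := by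
  have hsurj : Function.Surjective (dotphi w) := by
    intro z
    have hne : star w ⬝ᵥ w ≠ 0 := by
      intro h
      have := nsq_pos hw
      rw [h] at this
      simp at this
    exact ⟨(z / (star w ⬝ᵥ w)) • w, by
      show star w ⬝ᵥ ((z / (star w ⬝ᵥ w)) • w) = z
      rw [dotProduct_smul, smul_eq_mul]
      field_simp⟩
  have h1 := LinearMap.finrank_range_add_finrank_ker (dotphi w)
  rw [LinearMap.range_eq_top.mpr hsurj] at h1
  have h2 : Module.finrank ℂ (⊤ : Submodule ℂ ℂ) = 1 := by
    rw [finrank_top, Module.finrank_self]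
  rw [h2, Module.finrank_pi, Fintype.card_fin] at h1
  rw [wPerp]
  omega

/-- construction of the isometry onto `w ᗮ` -/
theorem exists_isometry (hN : 0 < N) {w : Fin N → ℂ} (hw : w ≠ 0) :
    ∃ U : Matrix (Fin N) (Fin (N-1)) ℂ, Uᴴ * U = 1 ∧
      wPerp w ≤ LinearMap.range U.mulVecLin := by
  classical
  haveI : Fact (Module.finrank ℂ (EuclideanSpace ℂ (Fin N)) = (N-1) + 1) :=
    ⟨by rw [finrank_euclideanSpace, Fintype.card_fin]; omega⟩
  set wE : EuclideanSpace ℂ (Fin N) := (WithLp.equiv 2 _).symm w with hwE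
  have hwE0 : wE ≠ 0 := by
    simp only [hwE, ne_eq, EmbeddingLike.map_eq_zero_iff]
    exact fun h => hw (by simpa using congrArg (WithLp.equiv 2 (Fin N → ℂ)) h)
  set B := OrthonormalBasis.fromOrthogonalSpanSingleton (𝕜 := ℂ) (N-1) hwE0 with hB
  set U : Matrix (Fin N) (Fin (N-1)) ℂ :=
    fun x c => (WithLp.equiv 2 _) ((B c : EuclideanSpace ℂ (Fin N))) x with hU
  have hcol : ∀ c, (fun x => U x c) = (WithLp.equiv 2 _) ((B c : EuclideanSpace ℂ (Fin N))) := by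
    intro c; rfl
  have hUU : Uᴴ * U = 1 := by
    ext c d
    rw [Matrix.mul_apply]
    have : ∑ x, (Uᴴ) c x * U x d = star (fun x => U x c) ⬝ᵥ (fun x => U x d) := by
      simp [dotProduct, Matrix.conjTranspose_apply]
    rw [this, hcol, hcol]
    have hin := (orthonormal_iff_ite (𝕜 := ℂ)).mp B.orthonormal c d
    rw [Submodule.coe_inner, EuclideanSpace.inner_eq_star_dotProduct, dotProduct_comm] at hin
    exact hin.trans Matrix.one_apply.symm
  -- columns are orthogonal to w
  have hcw : ∀ c, star w ⬝ᵥ (fun x => U x c) = 0 := by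
    intro c
    have hmem : (B c : EuclideanSpace ℂ (Fin N)) ∈ (Submodule.span ℂ {wE})ᗮ := (B c).2
    have := hmem wE (Submodule.mem_span_singleton_self wE)
    rw [EuclideanSpace.inner_eq_star_dotProduct, dotProduct_comm] at this
    rw [hcol]
    exact this
  -- linear independence of the columns
  have hli : LinearIndependent ℂ (fun c : Fin (N-1) => (fun x => U x c)) := by
    rw [Fintype.linearIndependent_iff]
    intro g hg j
    have h := congrArg (fun y => star (fun x => U x j) ⬝ᵥ y) hg
    simp only [dotProduct_zero] at h
    rw [dot_sum_right] at h
    have h2 : ∀ i ∈ Finset.univ, star (fun x => U x j) ⬝ᵥ (g i • fun x => U x i)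
        = if i = j then g i else 0 := by
      intro i _
      rw [dotProduct_smul]
      have : star (fun x => U x j) ⬝ᵥ (fun x => U x i) = if j = i then 1 else 0 := by
        have := congrFun (congrFun hUU j) i
        rw [Matrix.mul_apply] at this
        rw [show star (fun x => U x j) ⬝ᵥ (fun x => U x i) = ∑ x, (Uᴴ) j x * U x i by
          simp [dotProduct, Matrix.conjTranspose_apply], this, Matrix.one_apply]
      rw [this]
      by_cases hij : i = j
      · simp [hij]
      · have hji : ¬ j = i := fun h => hij h.symm
        rw [if_neg hji, if_neg hij, smul_zero]
    rw [Finset.sum_congr rfl h2, Finset.sum_ite_eq' Finset.univ j g,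
      if_pos (Finset.mem_univ _)] at h
    exact h
  -- span of columns equals wPerp
  have hspan : Submodule.span ℂ (Set.range Uᵀ) = wPerp w := by
    apply Submodule.eq_of_le_of_finrank_le
    · rw [Submodule.span_le]
      rintro - ⟨c, rfl⟩
      rw [SetLike.mem_coe, mem_wPerp]
      exact hcw c
    · rw [finrank_wPerp hw]
      have : Module.finrank ℂ (Submodule.span ℂ (Set.range Uᵀ)) = N - 1 := by
        have := finrank_span_eq_card (R := ℂ) hli
        rw [Fintype.card_fin] at this
        exact this
      omega
  refine ⟨U, hUU, ?_⟩
  rw [Matrix.range_mulVecLin]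
  exact hspan.symm.le






theorem compression_herm {M : Matrix (Fin N) (Fin N) ℂ} (hM : M.IsHermitian)
    (U : Matrix (Fin N) (Fin m) ℂ) : (Uᴴ * M * U).IsHermitian := by
  unfold Matrix.IsHermitian
  rw [Matrix.conjTranspose_mul, Matrix.conjTranspose_mul, Matrix.conjTranspose_conjTranspose,
    hM.eq, Matrix.mul_assoc]

theorem mulVecLin_inj {U : Matrix (Fin N) (Fin m) ℂ} (hU : Uᴴ * U = 1) :
    Function.Injective U.mulVecLin := by
  intro x y hxy
  have h : Uᴴ *ᵥ (U *ᵥ x) = Uᴴ *ᵥ (U *ᵥ y) := by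
    simp only [Matrix.mulVecLin_apply] at hxy
    rw [hxy]
  rwa [Matrix.mulVec_mulVec, Matrix.mulVec_mulVec, hU, Matrix.one_mulVec,
    Matrix.one_mulVec] at h

theorem finrank_comap {U : Matrix (Fin N) (Fin m) ℂ} (hU : Uᴴ * U = 1)
    (T : Submodule ℂ (Fin N → ℂ)) (hT : T ≤ LinearMap.range U.mulVecLin) :
    Module.finrank ℂ (Submodule.comap U.mulVecLin T) = Module.finrank ℂ T := by
  have hmap : Submodule.map U.mulVecLin (Submodule.comap U.mulVecLin T) = T := by
    rw [Submodule.map_comap_eq, inf_eq_right.mpr hT]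
  have := LinearEquiv.finrank_eq
    (Submodule.equivMapOfInjective U.mulVecLin (mulVecLin_inj hU)
      (Submodule.comap U.mulVecLin T))
  rw [this, hmap]

theorem ray_transfer {M : Matrix (Fin N) (Fin N) ℂ} (U : Matrix (Fin N) (Fin m) ℂ)
    (y : Fin m → ℂ) :
    star y ⬝ᵥ ((Uᴴ * M * U) *ᵥ y) = star (U *ᵥ y) ⬝ᵥ (M *ᵥ (U *ᵥ y)) := by
  rw [← Matrix.mulVec_mulVec, ← Matrix.mulVec_mulVec, Matrix.dotProduct_mulVec (star y),
    Matrix.star_mulVec]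

theorem nsq_transfer {U : Matrix (Fin N) (Fin m) ℂ} (hU : Uᴴ * U = 1) (y : Fin m → ℂ) :
    star (U *ᵥ y) ⬝ᵥ (U *ᵥ y) = star y ⬝ᵥ y := by
  rw [Matrix.star_mulVec, ← Matrix.dotProduct_mulVec, Matrix.mulVec_mulVec, hU,
    Matrix.one_mulVec]

theorem comp_le {M : Matrix (Fin N) (Fin N) ℂ} (hM : M.IsHermitian)
    {U : Matrix (Fin N) (Fin m) ℂ} (hU : Uᴴ * U = 1)
    (j : Fin m) (j' : Fin N) (T : Submodule ℂ (Fin N → ℂ))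
    (hT : T ≤ LinearMap.range U.mulVecLin)
    (hdim : m - j.val ≤ Module.finrank ℂ T)
    (hray : ∀ x ∈ T, (star x ⬝ᵥ (M *ᵥ x)).re ≤ eigval M j' * (star x ⬝ᵥ x).re) :
    eigval (Uᴴ * M * U) j ≤ eigval M j' := by
  refine cf_upper (compression_herm hM U) j (Submodule.comap U.mulVecLin T) ?_ _ ?_
  · rw [finrank_comap hU T hT]; exact hdim
  · intro y hy
    rw [ray_transfer U y, ← nsq_transfer hU y]
    exact hray _ hy

theorem comp_ge {M : Matrix (Fin N) (Fin N) ℂ} (hM : M.IsHermitian)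
    {U : Matrix (Fin N) (Fin m) ℂ} (hU : Uᴴ * U = 1)
    (j : Fin m) (j' : Fin N) (T : Submodule ℂ (Fin N → ℂ))
    (hT : T ≤ LinearMap.range U.mulVecLin)
    (hdim : j.val + 1 ≤ Module.finrank ℂ T)
    (hray : ∀ x ∈ T, eigval M j' * (star x ⬝ᵥ x).re ≤ (star x ⬝ᵥ (M *ᵥ x)).re) :
    eigval M j' ≤ eigval (Uᴴ * M * U) j := by
  refine cf_lower (compression_herm hM U) j (Submodule.comap U.mulVecLin T) ?_ _ ?_
  · rw [finrank_comap hU T hT]; exact hdim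
  · intro y hy
    rw [ray_transfer U y, ← nsq_transfer hU y]
    exact hray _ hy







theorem det_eq_ofReal {M : Matrix (Fin N) (Fin N) ℂ} (hM : M.IsHermitian) :
    M.det = ((∏ t, eigval M t : ℝ) : ℂ) := by
  rw [hM.det_eq_prod_eigenvalues, prod_eigval hM, Complex.ofReal_prod]
  exact Finset.prod_congr rfl fun i _ => rfl

theorem det_one_add {C : Matrix (Fin N) (Fin N) ℂ} (hC : C.PosSemidef) :
    (1 + C).det = ((∏ i, (1 + hC.1.eigenvalues i) : ℝ) : ℂ) := by
  have hspec := hC.1.spectral_theorem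
  rw [Unitary.conjStarAlgAut_apply] at hspec
  set V : Matrix (Fin N) (Fin N) ℂ := ↑(hC.1.eigenvectorUnitary) with hV
  set D : Matrix (Fin N) (Fin N) ℂ := diagonal (RCLike.ofReal ∘ hC.1.eigenvalues) with hD
  have hVV : V * star V = 1 := (Matrix.mem_unitaryGroup_iff).mp (hC.1.eigenvectorUnitary).2
  have h1 : 1 + C = V * (1 + D) * star V := by
    rw [Matrix.mul_add, Matrix.add_mul, Matrix.mul_one, hVV, ← hspec]
  rw [h1, Matrix.det_mul, Matrix.det_mul]
  have h2 : V.det * (1 + D).det * (star V).det = (1 + D).det * ((V * star V).det) := by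
    rw [Matrix.det_mul]; ring
  rw [h2, hVV, Matrix.det_one, mul_one, hD]
  rw [show (1 : Matrix (Fin N) (Fin N) ℂ) = diagonal (fun _ => 1) from (Matrix.diagonal_one).symm,
    Matrix.diagonal_add, Matrix.det_diagonal, Complex.ofReal_prod]
  refine Finset.prod_congr rfl fun i _ => ?_
  push_cast
  rfl

open scoped MatrixOrder in
/-- key splitting: if `det A ≠ 0`, write products for `A+B` and `B` through `A`. -/
theorem split {A B : Matrix (Fin N) (Fin N) ℂ} (hA : A.PosSemidef) (hB : B.PosSemidef)
    (ha0 : (∏ t, eigval A t) ≠ 0) :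
    ∃ γ : Fin N → ℝ, (∀ i, 0 ≤ γ i) ∧
      (∏ t, eigval (A + B) t) = (∏ t, eigval A t) * ∏ i, (1 + γ i) ∧
      (∏ t, eigval B t) = (∏ t, eigval A t) * ∏ i, γ i := by
  classical
  set a := ∏ t, eigval A t
  set S := CFC.sqrt A with hS
  have hSpsd : S.PosSemidef := (CFC.sqrt_nonneg A).posSemidef
  have hSherm : S.IsHermitian := hSpsd.1
  have hSS : S * S = A := CFC.sqrt_mul_sqrt_self A hA.nonneg
  have hdetA : A.det = (a : ℂ) := det_eq_ofReal hA.1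
  have hdS : S.det ≠ 0 := by
    intro h
    apply ha0
    have : A.det = 0 := by rw [← hSS, Matrix.det_mul, h, mul_zero]
    rw [hdetA] at this
    exact_mod_cast this
  have hdU : IsUnit S.det := isUnit_iff_ne_zero.mpr hdS
  have hSinv_herm : S⁻¹ᴴ = S⁻¹ := by rw [Matrix.conjTranspose_nonsing_inv, hSherm.eq]
  set C := S⁻¹ * B * S⁻¹ with hC
  have hCpsd : C.PosSemidef := by
    have := hB.mul_mul_conjTranspose_same S⁻¹
    rwa [hSinv_herm] at this
  have hBC : S * C * S = B := by
    rw [hC]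
    calc S * (S⁻¹ * B * S⁻¹) * S = (S * S⁻¹) * B * (S⁻¹ * S) := by
          simp only [Matrix.mul_assoc]
      _ = B := by rw [Matrix.mul_nonsing_inv _ hdU, Matrix.nonsing_inv_mul _ hdU,
          Matrix.one_mul, Matrix.mul_one]
  have hAB : A + B = S * (1 + C) * S := by
    rw [Matrix.mul_add, Matrix.add_mul, Matrix.mul_one, hSS, hBC]
  refine ⟨hCpsd.1.eigenvalues, fun i => hCpsd.eigenvalues_nonneg i, ?_, ?_⟩
  · have h1 : (A + B).det = (a : ℂ) * ((∏ i, (1 + hCpsd.1.eigenvalues i) : ℝ) : ℂ) := by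
      rw [hAB, Matrix.det_mul, Matrix.det_mul, det_one_add hCpsd]
      rw [show S.det * (((∏ i, (1 + hCpsd.1.eigenvalues i) : ℝ) : ℂ)) * S.det
        = (S.det * S.det) * (((∏ i, (1 + hCpsd.1.eigenvalues i) : ℝ) : ℂ)) from by ring,
        show S.det * S.det = A.det from by rw [← hSS, Matrix.det_mul], hdetA]
    have h2 : (A + B).det = ((∏ t, eigval (A + B) t : ℝ) : ℂ) := det_eq_ofReal (hA.add hB).1
    rw [h2] at h1
    exact_mod_cast h1
  · have h1 : B.det = (a : ℂ) * ((∏ i, hCpsd.1.eigenvalues i : ℝ) : ℂ) := by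
      rw [← hBC, Matrix.det_mul, Matrix.det_mul]
      rw [show S.det * C.det * S.det = (S.det * S.det) * C.det from by ring,
        show S.det * S.det = A.det from by rw [← hSS, Matrix.det_mul], hdetA,
        det_eq_ofReal hCpsd.1, prod_eigval hCpsd.1]
    have h2 : B.det = ((∏ t, eigval B t : ℝ) : ℂ) := det_eq_ofReal hB.1
    rw [h2] at h1
    exact_mod_cast h1

theorem minkowski (hN : 0 < N) (A B : Matrix (Fin N) (Fin N) ℂ)
    (hA : A.PosSemidef) (hB : B.PosSemidef) :
    ∏ t, eigval A t ^ ((N:ℝ)⁻¹) + ∏ t, eigval B t ^ ((N:ℝ)⁻¹)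
      ≤ ∏ t, eigval (A + B) t ^ ((N:ℝ)⁻¹) := by
  classical
  haveI : Nonempty (Fin N) := ⟨⟨0, hN⟩⟩
  have hrne : ((N:ℝ)⁻¹) ≠ 0 := by positivity
  have hrnn : (0:ℝ) ≤ (N:ℝ)⁻¹ := by positivity
  rw [Real.finset_prod_rpow _ _ (fun t _ => eigval_nonneg hA t) _,
    Real.finset_prod_rpow _ _ (fun t _ => eigval_nonneg hB t) _,
    Real.finset_prod_rpow _ _ (fun t _ => eigval_nonneg (hA.add hB) t) _]
  have ha : 0 ≤ ∏ t, eigval A t := Finset.prod_nonneg fun t _ => eigval_nonneg hA t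
  have hb : 0 ≤ ∏ t, eigval B t := Finset.prod_nonneg fun t _ => eigval_nonneg hB t
  have hc : 0 ≤ ∏ t, eigval (A+B) t := Finset.prod_nonneg fun t _ => eigval_nonneg (hA.add hB) t
  by_cases ha0 : (∏ t, eigval A t) = 0
  · rw [ha0, Real.zero_rpow hrne, zero_add]
    have hbc : (∏ t, eigval B t) ≤ ∏ t, eigval (A+B) t := by
      by_cases hb0 : (∏ t, eigval B t) = 0
      · rw [hb0]; exact hc
      · obtain ⟨γ, hγ0, hcb, -⟩ := split hB hA hb0
        rw [add_comm] at hcb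
        rw [hcb]
        have h1 : (1:ℝ) ≤ ∏ i, (1 + γ i) := by
          have := Finset.prod_le_prod (s := (Finset.univ : Finset (Fin N)))
            (f := fun _ : Fin N => (1:ℝ)) (g := fun i => 1 + γ i)
            (fun i _ => zero_le_one) (fun i _ => by show (1:ℝ) ≤ 1 + γ i; linarith [hγ0 i])
          simpa using this
        nlinarith [lt_of_le_of_ne hb (Ne.symm hb0)]
    exact Real.rpow_le_rpow hb hbc hrnn
  · obtain ⟨γ, hγ0, hcp, hbp⟩ := split hA hB ha0
    have hgm := gm_superadd (Finset.univ : Finset (Fin N)) Finset.univ_nonempty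
      (fun _ => (1:ℝ)) γ (fun i _ => zero_le_one) (fun i _ => hγ0 i)
    rw [Finset.prod_const_one, Real.one_rpow, Finset.card_univ, Fintype.card_fin] at hgm
    rw [hcp, hbp]
    rw [Real.mul_rpow ha (Finset.prod_nonneg fun i _ => hγ0 i),
      Real.mul_rpow ha (Finset.prod_nonneg fun i _ => by linarith [hγ0 i])]
    calc (∏ t, eigval A t) ^ ((N:ℝ)⁻¹) + (∏ t, eigval A t) ^ ((N:ℝ)⁻¹) * (∏ i, γ i) ^ ((N:ℝ)⁻¹)
        = (∏ t, eigval A t) ^ ((N:ℝ)⁻¹) * (1 + (∏ i, γ i) ^ ((N:ℝ)⁻¹)) := by ring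
      _ ≤ (∏ t, eigval A t) ^ ((N:ℝ)⁻¹) * (∏ i, (1 + γ i)) ^ ((N:ℝ)⁻¹) :=
          mul_le_mul_of_nonneg_left hgm (Real.rpow_nonneg ha _)

theorem finrank_inf_ge {N : ℕ} (S T : Submodule ℂ (Fin N → ℂ)) :
    Module.finrank ℂ S + Module.finrank ℂ T - N
      ≤ Module.finrank ℂ (S ⊓ T : Submodule ℂ (Fin N → ℂ)) := by
  have h := Submodule.finrank_sup_add_finrank_inf_eq S T
  have h2 : Module.finrank ℂ (S ⊔ T : Submodule ℂ (Fin N → ℂ)) ≤ N := by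
    have := Submodule.finrank_le (S ⊔ T : Submodule ℂ (Fin N → ℂ))
    rwa [Module.finrank_pi, Fintype.card_fin] at this
  omega

theorem espan_le_wPerp {N : ℕ} {M : Matrix (Fin N) (Fin N) ℂ} (hMh : M.IsHermitian)
    (F G : Finset (Fin N)) {w : Fin N → ℂ} (hw : w ∈ ESpan hMh G)
    (hFG : ∀ t ∈ F, t ∉ G) : ESpan hMh F ≤ wPerp w := by
  rw [ESpan]
  apply Submodule.span_le.mpr
  rintro - ⟨t, rfl⟩
  rw [SetLike.mem_coe, mem_wPerp]
  exact espan_orth hMh G hw (hFG t t.2)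

theorem comp_ge_espan {N m : ℕ} {M : Matrix (Fin N) (Fin N) ℂ} (hMh : M.IsHermitian)
    {U : Matrix (Fin N) (Fin m) ℂ} (hU : Uᴴ * U = 1) {w : Fin N → ℂ}
    (hKle : wPerp w ≤ LinearMap.range U.mulVecLin)
    (j : Fin m) (j' : Fin N)
    (hdim : j.val + 1 ≤ Module.finrank ℂ
      ((ESpan hMh (Finset.univ.filter fun t => t.val ≤ j'.val) ⊓ wPerp w :
        Submodule ℂ (Fin N → ℂ)))) :
    eigval M j' ≤ eigval (Uᴴ * M * U) j := by
  refine comp_ge hMh hU j j' _ (le_trans inf_le_right hKle) hdim ?_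
  intro x hx
  refine ray_ge_of_mem hMh _ _ (fun t ht => ?_) (Submodule.mem_inf.mp hx).1
  exact eigval_antitone hMh (Fin.le_def.mpr (Finset.mem_filter.mp ht).2)

theorem comp_le_espan {N m : ℕ} {M : Matrix (Fin N) (Fin N) ℂ} (hMh : M.IsHermitian)
    {U : Matrix (Fin N) (Fin m) ℂ} (hU : Uᴴ * U = 1) {w : Fin N → ℂ}
    (hKle : wPerp w ≤ LinearMap.range U.mulVecLin)
    (j : Fin m) (j' : Fin N)
    (hdim : m - j.val ≤ Module.finrank ℂ
      ((ESpan hMh (Finset.univ.filter fun t => j'.val ≤ t.val) ⊓ wPerp w :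
        Submodule ℂ (Fin N → ℂ)))) :
    eigval (Uᴴ * M * U) j ≤ eigval M j' := by
  refine comp_le hMh hU j j' _ (le_trans inf_le_right hKle) hdim ?_
  intro x hx
  refine ray_le_of_mem hMh _ _ (fun t ht => ?_) (Submodule.mem_inf.mp hx).1
  exact eigval_antitone hMh (Fin.le_def.mpr (Finset.mem_filter.mp ht).2)

theorem card_filter_le' {N : ℕ} {v : ℕ} (hv : v < N) :
    (Finset.univ.filter fun t : Fin N => t.val ≤ v).card = v + 1 := by
  have h : (Finset.univ.filter fun t : Fin N => t.val ≤ v)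
      = Finset.univ.filter fun t : Fin N => t.val < v + 1 := by
    ext t; simp [Nat.lt_succ_iff]
  rw [h, card_filter_lt (by omega)]

theorem main : ∀ N k : ℕ, 0 < k → ∀ (hkn : k ≤ N) (A B : Matrix (Fin N) (Fin N) ℂ),
    A.PosSemidef → B.PosSemidef → ∀ i : Fin k → Fin N, StrictMono i →
    (∏ t, eigval A (i t) ^ ((k:ℝ)⁻¹))
      + (∏ t : Fin k, eigval B ((Fin.castLE hkn t).rev) ^ ((k:ℝ)⁻¹))
      ≤ ∏ t, eigval (A + B) (i t) ^ ((k:ℝ)⁻¹) := by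
  intro N
  induction N using Nat.strong_induction_on with
  | _ N IH =>
    intro k hk hkn A B hA hB i hi
    classical
    have hr0 : (0:ℝ) ≤ (k:ℝ)⁻¹ := by positivity
    by_cases hlt : k < N
    · -- inductive step: compress out one dimension
      have hN : 0 < N := by omega
      have hA1 := hA.1
      have hB1 := hB.1
      have hM : (A + B).PosSemidef := hA.add hB
      have hM1 := hM.1
      -- find a value p missed by all indices
      obtain ⟨p, hpN, hpmiss⟩ : ∃ p : ℕ, p < N ∧ ∀ s : Fin k, (i s).val ≠ p := by
        by_contra hcon
        push_neg at hcon
        have hsub : Finset.range N ⊆ Finset.univ.image (fun s : Fin k => (i s).val) := by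
          intro x hx
          obtain ⟨s, hs⟩ := hcon x (Finset.mem_range.mp hx)
          exact Finset.mem_image.mpr ⟨s, Finset.mem_univ s, hs⟩
        have := Finset.card_le_card hsub
        rw [Finset.card_range] at this
        have h2 := Finset.card_image_le (s := (Finset.univ : Finset (Fin k)))
          (f := fun s : Fin k => (i s).val)
        rw [Finset.card_univ, Fintype.card_fin] at h2
        omega
      -- find w
      obtain ⟨w, hw0, hwmem⟩ := exists_ne_zero_mem_inf
        (ESpan hA1 (Finset.univ.filter fun t => p ≤ t.val))
        (ESpan hM1 (Finset.univ.filter fun r => r.val < p + 1))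
        (by rw [finrank_espan, finrank_espan, card_filter_ge (by omega : p ≤ N),
              card_filter_lt (by omega : p + 1 ≤ N)]; omega)
      have hwA : w ∈ ESpan hA1 (Finset.univ.filter fun t => p ≤ t.val) :=
        (Submodule.mem_inf.mp hwmem).1
      have hwM : w ∈ ESpan hM1 (Finset.univ.filter fun r => r.val < p + 1) :=
        (Submodule.mem_inf.mp hwmem).2
      obtain ⟨U, hUU, hKle⟩ := exists_isometry hN hw0
      set A' := Uᴴ * A * U with hA'
      set B' := Uᴴ * B * U with hB'
      have hA'psd : A'.PosSemidef := hA.conjTranspose_mul_mul_same U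
      have hB'psd : B'.PosSemidef := hB.conjTranspose_mul_mul_same U
      have hMfact : Uᴴ * (A + B) * U = A' + B' := by
        rw [hA', hB', Matrix.mul_add, Matrix.add_mul]
      have hM'psd : (A' + B').PosSemidef := by
        rw [← hMfact]; exact hM.conjTranspose_mul_mul_same U
      have hKrank : Module.finrank ℂ (wPerp w) = N - 1 := finrank_wPerp hw0
      -- the new index function
      have hi'bound : ∀ s : Fin k,
          (if (i s).val < p then (i s).val else (i s).val - 1) < N - 1 := by
        intro s
        have h1 := (i s).isLt
        have h2 := hpmiss s
        split_ifs with hc <;> omega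
      set i' : Fin k → Fin (N - 1) := fun s => ⟨_, hi'bound s⟩ with hi'def
      have hi'val : ∀ s : Fin k,
          (i' s).val = if (i s).val < p then (i s).val else (i s).val - 1 := fun s => rfl
      have hi' : StrictMono i' := by
        intro s t hst
        have h1 := hi hst
        rw [Fin.lt_def] at h1 ⊢
        rw [hi'val, hi'val]
        have h2 := hpmiss s
        have h3 := hpmiss t
        split_ifs with hc1 hc2 hc2 <;> omega
      -- eigenvalue comparisons
      have hAcomp : ∀ s : Fin k, eigval A (i s) ≤ eigval A' (i' s) := by
        intro s
        rw [hA']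
        by_cases hc : (i s).val < p
        · refine comp_ge_espan hA1 hUU hKle (i' s) (i s) ?_
          have hle : ESpan hA1 (Finset.univ.filter fun t => t.val ≤ (i s).val) ≤ wPerp w := by
            refine espan_le_wPerp hA1 _ _ hwA (fun t ht => ?_)
            simp only [Finset.mem_filter, Finset.mem_univ, true_and, not_le] at ht ⊢
            omega
          rw [inf_eq_left.mpr hle, finrank_espan, card_filter_le' (i s).isLt, hi'val, if_pos hc]
        · refine comp_ge_espan hA1 hUU hKle (i' s) (i s) ?_
          have hge := finrank_inf_ge
            (ESpan hA1 (Finset.univ.filter fun t => t.val ≤ (i s).val)) (wPerp w)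
          rw [finrank_espan, card_filter_le' (i s).isLt, hKrank] at hge
          have h2 := hpmiss s
          have h3 := (i s).isLt
          rw [hi'val, if_neg hc]
          omega
      have hMcomp : ∀ s : Fin k, eigval (A' + B') (i' s) ≤ eigval (A + B) (i s) := by
        intro s
        rw [← hMfact]
        by_cases hc : (i s).val < p
        · refine comp_le_espan hM1 hUU hKle (i' s) (i s) ?_
          have hge := finrank_inf_ge
            (ESpan hM1 (Finset.univ.filter fun t => (i s).val ≤ t.val)) (wPerp w)
          rw [finrank_espan, card_filter_ge (le_of_lt (i s).isLt), hKrank] at hge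
          have h3 := (i s).isLt
          rw [hi'val, if_pos hc]
          omega
        · refine comp_le_espan hM1 hUU hKle (i' s) (i s) ?_
          have hle : ESpan hM1 (Finset.univ.filter fun t => (i s).val ≤ t.val) ≤ wPerp w := by
            refine espan_le_wPerp hM1 _ _ hwM (fun t ht => ?_)
            simp only [Finset.mem_filter, Finset.mem_univ, true_and, not_lt] at ht ⊢
            have h2 := hpmiss s
            omega
          rw [inf_eq_left.mpr hle, finrank_espan, card_filter_ge (le_of_lt (i s).isLt),
            hi'val, if_neg hc]
          have h2 := hpmiss s
          have h3 := (i s).isLt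
          omega
      have hkm : k ≤ N - 1 := by omega
      have hBcomp : ∀ t : Fin k,
          eigval B ((Fin.castLE hkn t).rev) ≤ eigval B' ((Fin.castLE hkm t).rev) := by
        intro t
        rw [hB']
        refine comp_ge_espan hB1 hUU hKle ((Fin.castLE hkm t).rev) ((Fin.castLE hkn t).rev) ?_
        have hge := finrank_inf_ge
          (ESpan hB1 (Finset.univ.filter fun s =>
            s.val ≤ ((Fin.castLE hkn t).rev).val)) (wPerp w)
        rw [finrank_espan, card_filter_le' ((Fin.castLE hkn t).rev).isLt, hKrank] at hge
        have h1 : ((Fin.castLE hkn t).rev).val = N - (t.val + 1) := by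
          rw [Fin.val_rev]; simp
        have h2 : ((Fin.castLE hkm t).rev).val = (N - 1) - (t.val + 1) := by
          rw [Fin.val_rev]; simp
        have h3 := t.isLt
        omega
      -- apply induction hypothesis
      have hIH := IH (N - 1) (by omega) k hk hkm A' B' hA'psd hB'psd i' hi'
      -- assemble
      have prodA : (∏ t, eigval A (i t) ^ ((k:ℝ)⁻¹)) ≤ ∏ t, eigval A' (i' t) ^ ((k:ℝ)⁻¹) :=
        Finset.prod_le_prod (fun t _ => Real.rpow_nonneg (eigval_nonneg hA _) _)
          (fun t _ => Real.rpow_le_rpow (eigval_nonneg hA _) (hAcomp t) hr0)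
      have prodB : (∏ t : Fin k, eigval B ((Fin.castLE hkn t).rev) ^ ((k:ℝ)⁻¹))
          ≤ ∏ t : Fin k, eigval B' ((Fin.castLE hkm t).rev) ^ ((k:ℝ)⁻¹) :=
        Finset.prod_le_prod (fun t _ => Real.rpow_nonneg (eigval_nonneg hB _) _)
          (fun t _ => Real.rpow_le_rpow (eigval_nonneg hB _) (hBcomp t) hr0)
      have prodM : (∏ t, eigval (A' + B') (i' t) ^ ((k:ℝ)⁻¹))
          ≤ ∏ t, eigval (A + B) (i t) ^ ((k:ℝ)⁻¹) :=
        Finset.prod_le_prod (fun t _ => Real.rpow_nonneg (eigval_nonneg hM'psd _) _)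
          (fun t _ => Real.rpow_le_rpow (eigval_nonneg hM'psd _) (hMcomp t) hr0)
      calc (∏ t, eigval A (i t) ^ ((k:ℝ)⁻¹))
            + (∏ t : Fin k, eigval B ((Fin.castLE hkn t).rev) ^ ((k:ℝ)⁻¹))
          ≤ (∏ t, eigval A' (i' t) ^ ((k:ℝ)⁻¹))
            + (∏ t : Fin k, eigval B' ((Fin.castLE hkm t).rev) ^ ((k:ℝ)⁻¹)) :=
            add_le_add prodA prodB
        _ ≤ ∏ t, eigval (A' + B') (i' t) ^ ((k:ℝ)⁻¹) := hIH
        _ ≤ ∏ t, eigval (A + B) (i t) ^ ((k:ℝ)⁻¹) := prodM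
    · -- base case k = N : Minkowski
      have hkN : k = N := by omega
      subst hkN
      have hbij : Function.Bijective i :=
        (Fintype.bijective_iff_injective_and_card i).mpr ⟨hi.injective, by simp⟩
      have hbijB : Function.Bijective (fun t : Fin k => (Fin.castLE hkn t).rev) := by
        refine (Fintype.bijective_iff_injective_and_card _).mpr ⟨?_, by simp⟩
        exact fun a b hab => Fin.castLE_injective hkn (Fin.rev_injective hab)
      have h1 : (∏ t, eigval A (i t) ^ ((k:ℝ)⁻¹)) = ∏ s, eigval A s ^ ((k:ℝ)⁻¹) :=
        Fintype.prod_bijective i hbij _ _ (fun t => rfl)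
      have h2 : (∏ t, eigval (A + B) (i t) ^ ((k:ℝ)⁻¹)) = ∏ s, eigval (A + B) s ^ ((k:ℝ)⁻¹) :=
        Fintype.prod_bijective i hbij _ _ (fun t => rfl)
      have h3 : (∏ t : Fin k, eigval B ((Fin.castLE hkn t).rev) ^ ((k:ℝ)⁻¹))
          = ∏ s, eigval B s ^ ((k:ℝ)⁻¹) :=
        Fintype.prod_bijective _ hbijB _ _ (fun t => rfl)
      rw [h1, h2, h3]
      exact minkowski hk A B hA hB

end PRF

theorem prod_eig_root_add_ge (n k : ℕ) (hn : 0 < n) (hk : 0 < k) (hkn : k ≤ n)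
    (A B : Matrix (Fin n) (Fin n) ℂ) (hA : A.PosSemidef) (hB : B.PosSemidef)
    (i : Fin k → Fin n) (hi : StrictMono i) :
    ∏ t, eigval (A + B) (i t) ^ ((k : ℝ)⁻¹) ≥
      ∏ t, eigval A (i t) ^ ((k : ℝ)⁻¹) +
        ∏ t : Fin k, eigval B ((Fin.castLE hkn t).rev) ^ ((k : ℝ)⁻¹) :=
  PRF.main n k hk hkn A B hA hB i hi
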